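/- Soundness of local instantiations: let ψ(x̄) = ∃ȳ. φ(x̄, ȳ) with φ quantifier-free over Σ, let t̄ be a tuple of constants of the vocabulary, and let δ̂ be obtained from the transition relation δ (viewed as a sentence over Σ̂ ⊎ Σ̂') by conjoining the constraint ∃c̄. (r(t̄) → φ(t̄, c̄)) with fresh existentially quantified variables c̄ (a local instantiation of r at t̄). Then δ̂ is a sound instrumentation for δ and ψ; indeed ((∀x̄. r(x̄) ↔ ψ(x̄)) ∧ δ) → δ̂ is valid, and hence δ → δ̂[ψ/r, ψ'/r'] is valid. -/
import Mathlib


namespace BH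

/-- A first-order signature: function symbols (the 0-ary ones are the constants)
and relation symbols, each with an arity. -/
structure Sig where
  Func : Type
  funcArity : Func → ℕ
  Rel : Type
  relArity : Rel → ℕ

/-- A relational vocabulary: no proper function symbols,
i.e. every function symbol is a constant. -/
def Sig.Relational (S : Sig) : Prop := ∀ f, S.funcArity f = 0

/-- The two-vocabulary signature `Σ ⊎ Σ'`; `(s, false)` is the unprimed copy of the
symbol `s` and `(s, true)` is its primed copy. -/
def Sig.double (S : Sig) : Sig where
  Func := S.Func × Bool
  funcArity := fun p => S.funcArity p.1
  Rel := S.Rel × Bool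
  relArity := fun p => S.relArity p.1

/-- `Σ̂ = Σ ∪ {r}` where `r` (represented by `none`) is a fresh `a`-ary relation symbol. -/
def Sig.addRel (S : Sig) (a : ℕ) : Sig where
  Func := S.Func
  funcArity := S.funcArity
  Rel := Option S.Rel
  relArity := fun r => Option.elim r a S.relArity

/-- `Σ` extended with countably many fresh Skolem function symbols:
`(i, n)` is the `i`-th Skolem symbol, of arity `n`. -/
def Sig.skolemize (S : Sig) : Sig where
  Func := S.Func ⊕ (ℕ × ℕ)
  funcArity := Sum.elim S.funcArity Prod.snd
  Rel := S.Rel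
  relArity := S.relArity

/-- First-order terms over `S`, with variables indexed by `ℕ`. -/
inductive Term (S : Sig) : Type
  | var : ℕ → Term S
  | app : (f : S.Func) → (Fin (S.funcArity f) → Term S) → Term S

/-- First-order formulas (with equality) over `S`. -/
inductive Formula (S : Sig) : Type
  | rel : (r : S.Rel) → (Fin (S.relArity r) → Term S) → Formula S
  | eq : Term S → Term S → Formula S
  | fls : Formula S
  | not : Formula S → Formula S
  | and : Formula S → Formula S → Formula S
  | or : Formula S → Formula S → Formula S
  | all : ℕ → Formula S → Formula S
  | ex : ℕ → Formula S → Formula S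

variable {S : Sig}

def Formula.imp (φ ψ : Formula S) : Formula S := .or (.not φ) ψ

def Formula.iff (φ ψ : Formula S) : Formula S := .and (φ.imp ψ) (ψ.imp φ)

/-- A structure (model) for the signature `S`: a nonempty domain together with
interpretations of the function and relation symbols. -/
structure Struc (S : Sig) where
  Dom : Type
  [dom_nonempty : Nonempty Dom]
  interpFunc : (f : S.Func) → (Fin (S.funcArity f) → Dom) → Dom
  interpRel : (r : S.Rel) → (Fin (S.relArity r) → Dom) → Prop

attribute [instance] Struc.dom_nonempty

def Term.eval (A : Struc S) (v : ℕ → A.Dom) : Term S → A.Dom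
  | .var n => v n
  | .app f ts => A.interpFunc f fun i => Term.eval A v (ts i)

/-- Tarskian satisfaction. -/
def Formula.Realize (A : Struc S) (v : ℕ → A.Dom) : Formula S → Prop
  | .rel r ts => A.interpRel r fun i => (ts i).eval A v
  | .eq t u => t.eval A v = u.eval A v
  | .fls => False
  | .not φ => ¬ Formula.Realize A v φ
  | .and φ ψ => Formula.Realize A v φ ∧ Formula.Realize A v ψ
  | .or φ ψ => Formula.Realize A v φ ∨ Formula.Realize A v ψ
  | .all x φ => ∀ d : A.Dom, Formula.Realize A (Function.update v x d) φ
  | .ex x φ => ∃ d : A.Dom, Formula.Realize A (Function.update v x d) φ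

def Term.fvars : Term S → Set ℕ
  | .var n => {n}
  | .app _ ts => ⋃ i, Term.fvars (ts i)

def Formula.fvars : Formula S → Set ℕ
  | .rel _ ts => ⋃ i, (ts i).fvars
  | .eq t u => t.fvars ∪ u.fvars
  | .fls => ∅
  | .not φ => Formula.fvars φ
  | .and φ ψ => Formula.fvars φ ∪ Formula.fvars ψ
  | .or φ ψ => Formula.fvars φ ∪ Formula.fvars ψ
  | .all x φ => Formula.fvars φ \ {x}
  | .ex x φ => Formula.fvars φ \ {x}

/-- A sentence is a closed formula. -/
def Formula.IsSentence (φ : Formula S) : Prop := φ.fvars = ∅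

/-- Validity over all (finite and infinite) structures. -/
def Valid (φ : Formula S) : Prop := ∀ (A : Struc S) (v : ℕ → A.Dom), φ.Realize A v

def Satisfiable (φ : Formula S) : Prop := ∃ (A : Struc S) (v : ℕ → A.Dom), φ.Realize A v

def SetSatisfiable (Γ : Set (Formula S)) : Prop :=
  ∃ (A : Struc S) (v : ℕ → A.Dom), ∀ φ ∈ Γ, φ.Realize A v

/-- Quantifier-free formulas. -/
inductive Formula.IsQF : Formula S → Prop
  | rel : ∀ r ts, IsQF (.rel r ts)
  | eq : ∀ t u, IsQF (.eq t u)
  | fls : IsQF .fls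
  | not : ∀ {φ}, IsQF φ → IsQF (.not φ)
  | and : ∀ {φ ψ}, IsQF φ → IsQF ψ → IsQF (.and φ ψ)
  | or : ∀ {φ ψ}, IsQF φ → IsQF ψ → IsQF (.or φ ψ)

/-- Universal (`∀*` prenex) formulas. -/
inductive Formula.IsUniversal : Formula S → Prop
  | of_qf : ∀ {φ}, Formula.IsQF φ → IsUniversal φ
  | all : ∀ (x) {φ}, IsUniversal φ → IsUniversal (.all x φ)

/-- Existential (`∃*` prenex) formulas. -/
inductive Formula.IsExistential : Formula S → Prop
  | of_qf : ∀ {φ}, Formula.IsQF φ → IsExistential φ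
  | ex : ∀ (x) {φ}, IsExistential φ → IsExistential (.ex x φ)

/-- `∃*∀*` prenex formulas (the EPR class, over a relational signature). -/
inductive Formula.IsEA : Formula S → Prop
  | of_universal : ∀ {φ}, Formula.IsUniversal φ → IsEA φ
  | ex : ∀ (x) {φ}, IsEA φ → IsEA (.ex x φ)

/-- `∀*∃*` prenex formulas. -/
inductive Formula.IsAE : Formula S → Prop
  | of_existential : ∀ {φ}, Formula.IsExistential φ → IsAE φ
  | all : ∀ (x) {φ}, IsAE φ → IsAE (.all x φ)

/-- Alternation-free formulas: Boolean combinations of universal and existential formulas. -/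
inductive Formula.IsAF : Formula S → Prop
  | of_universal : ∀ {φ}, Formula.IsUniversal φ → IsAF φ
  | of_existential : ∀ {φ}, Formula.IsExistential φ → IsAF φ
  | not : ∀ {φ}, IsAF φ → IsAF (.not φ)
  | and : ∀ {φ ψ}, IsAF φ → IsAF ψ → IsAF (.and φ ψ)
  | or : ∀ {φ ψ}, IsAF φ → IsAF ψ → IsAF (.or φ ψ)

/-- Embed a term over `Σ` as a term over `Σ ⊎ Σ'` using the copy indicated by `b`
(`false` = unprimed, `true` = primed). -/
def Term.toDouble (b : Bool) : Term S → Term S.double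
  | .var n => .var n
  | .app f ts => .app (f, b) fun i => Term.toDouble b (ts i)

/-- Embed a formula over `Σ` as a formula over `Σ ⊎ Σ'` using the copy indicated by `b`;
`φ.toDouble true` is the primed copy `φ'`. -/
def Formula.toDouble (b : Bool) : Formula S → Formula S.double
  | .rel r ts => .rel (r, b) fun i => (ts i).toDouble b
  | .eq t u => .eq (t.toDouble b) (u.toDouble b)
  | .fls => .fls
  | .not φ => .not (Formula.toDouble b φ)
  | .and φ ψ => .and (Formula.toDouble b φ) (Formula.toDouble b ψ)
  | .or φ ψ => .or (Formula.toDouble b φ) (Formula.toDouble b ψ)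
  | .all x φ => .all x (Formula.toDouble b φ)
  | .ex x φ => .ex x (Formula.toDouble b φ)

/-- `I` is an inductive invariant for the transition relation `δ` iff `I ∧ δ → I'`
is valid over all (finite and infinite) structures. -/
def InductiveInvariant (δ : Formula S.double) (I : Formula S) : Prop :=
  Valid (Formula.imp (Formula.and (I.toDouble false) δ) (I.toDouble true))

/-- `I` is an inductive invariant for `δ` over finite structures iff `I ∧ δ → I'`
is valid over all finite structures. -/
def InductiveInvariantFin (δ : Formula S.double) (I : Formula S) : Prop :=
  ∀ (A : Struc S.double), Finite A.Dom → ∀ v : ℕ → A.Dom,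
    (Formula.imp (Formula.and (I.toDouble false) δ) (I.toDouble true)).Realize A v

def Term.substEnv (σ : ℕ → Term S) : Term S → Term S
  | .var n => σ n
  | .app f ts => .app f fun i => Term.substEnv σ (ts i)

/-- Capture-naive simultaneous substitution of terms for free variables. -/
def Formula.substEnv (σ : ℕ → Term S) : Formula S → Formula S
  | .rel r ts => .rel r fun i => (ts i).substEnv σ
  | .eq t u => .eq (t.substEnv σ) (u.substEnv σ)
  | .fls => .fls
  | .not φ => .not (Formula.substEnv σ φ)
  | .and φ ψ => .and (Formula.substEnv σ φ) (Formula.substEnv σ ψ)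
  | .or φ ψ => .or (Formula.substEnv σ φ) (Formula.substEnv σ ψ)
  | .all x φ => .all x (Formula.substEnv (Function.update σ x (.var x)) φ)
  | .ex x φ => .ex x (Formula.substEnv (Function.update σ x (.var x)) φ)

/-- Substitution of the term `t` for the variable `x`. -/
def Formula.substVar (x : ℕ) (t : Term S) (φ : Formula S) : Formula S :=
  φ.substEnv (Function.update Term.var x t)

mutual
  /-- Negation normal form. -/
  def Formula.nnf : Formula S → Formula S
    | .rel r ts => .rel r ts
    | .eq t u => .eq t u
    | .fls => .fls
    | .not φ => Formula.nnfNeg φ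
    | .and φ ψ => .and (Formula.nnf φ) (Formula.nnf ψ)
    | .or φ ψ => .or (Formula.nnf φ) (Formula.nnf ψ)
    | .all x φ => .all x (Formula.nnf φ)
    | .ex x φ => .ex x (Formula.nnf φ)

  /-- Negation normal form of the negation of a formula. -/
  def Formula.nnfNeg : Formula S → Formula S
    | .rel r ts => .not (.rel r ts)
    | .eq t u => .not (.eq t u)
    | .fls => .not .fls
    | .not φ => Formula.nnf φ
    | .and φ ψ => .or (Formula.nnfNeg φ) (Formula.nnfNeg ψ)
    | .or φ ψ => .and (Formula.nnfNeg φ) (Formula.nnfNeg ψ)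
    | .all x φ => .ex x (Formula.nnfNeg φ)
    | .ex x φ => .all x (Formula.nnfNeg φ)
end

/-- Embed a term over `Σ` into the Skolem-extended signature, while substituting
terms of the extended signature for its variables. -/
def Term.substSk (σ : ℕ → Term S.skolemize) : Term S → Term S.skolemize
  | .var n => σ n
  | .app f ts => .app (Sum.inl f) fun i => Term.substSk σ (ts i)

/-- The Skolemization worker.  `skolemAux φ c u env` Skolemizes the (NNF) formula `φ`,
where `c` is the index of the next fresh Skolem symbol, `u` is the list of universally
quantified variables currently in scope, and `env` maps each existentially quantified
variable in scope to its Skolem term (and every other variable to itself).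
It returns the Skolemized formula together with the next fresh Skolem index. -/
def skolemAux : Formula S → ℕ → List ℕ → (ℕ → Term S.skolemize) → Formula S.skolemize × ℕ
  | .rel r ts, c, _, env => (.rel r fun i => (ts i).substSk env, c)
  | .eq t u, c, _, env => (.eq (t.substSk env) (u.substSk env), c)
  | .fls, c, _, _ => (.fls, c)
  | .not φ, c, u, env =>
      let p := skolemAux φ c u env
      (.not p.1, p.2)
  | .and φ ψ, c, u, env =>
      let p := skolemAux φ c u env
      let q := skolemAux ψ p.2 u env
      (.and p.1 q.1, q.2)
  | .or φ ψ, c, u, env =>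
      let p := skolemAux φ c u env
      let q := skolemAux ψ p.2 u env
      (.or p.1 q.1, q.2)
  | .all x φ, c, u, env =>
      let p := skolemAux φ c (u ++ [x]) (Function.update env x (.var x))
      (.all x p.1, p.2)
  | .ex y φ, c, u, env =>
      skolemAux φ (c + 1) u
        (Function.update env y (.app (Sum.inr (c, u.length)) fun i => .var (u.get i)))

/-- Skolemization of `φ`, using fresh Skolem symbols starting from index `c`:
the universal formula over the Skolem-extended signature obtained from the negation
normal form of `φ` by replacing each existentially quantified variable by a fresh Skolem
function applied to the universally quantified variables in whose scope it lies. -/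
def Formula.skFrom (c : ℕ) (φ : Formula S) : Formula S.skolemize :=
  (skolemAux φ.nnf c [] Term.var).1

/-- The next fresh Skolem index after Skolemizing `φ` starting from index `c`. -/
def Formula.skCounter (c : ℕ) (φ : Formula S) : ℕ :=
  (skolemAux φ.nnf c [] Term.var).2

/-- Skolemization `Sk(φ)` of `φ`. -/
def Formula.sk (φ : Formula S) : Formula S.skolemize := φ.skFrom 0

def Term.IsGround : Term S → Prop
  | .var _ => False
  | .app _ ts => ∀ i, Term.IsGround (ts i)

/-- Function-nesting depth of a term: constants have depth 0. -/
def Term.depth : Term S → ℕ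
  | .var _ => 0
  | .app _ ts => Finset.univ.sup fun i => Term.depth (ts i) + 1

/-- The maximal depth of a term occurring in a formula; for an instantiation `φ[t̄]`
(a ground formula) this is the least `k` such that every ground term occurring in it
lies in `Terms_k`. -/
def Formula.tDepth : Formula S → ℕ
  | .rel _ ts => Finset.univ.sup fun i => (ts i).depth
  | .eq t u => max t.depth u.depth
  | .fls => 0
  | .not φ => Formula.tDepth φ
  | .and φ ψ => max (Formula.tDepth φ) (Formula.tDepth ψ)
  | .or φ ψ => max (Formula.tDepth φ) (Formula.tDepth ψ)
  | .all _ φ => Formula.tDepth φ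
  | .ex _ φ => Formula.tDepth φ

/-- `BInst k φ χ` holds iff `χ` is an instantiation `φ[t̄]` of the universal formula `φ`
by a tuple `t̄` of ground terms of depth at most `k` (`t̄ ∈ Terms_k`): each universally
quantified variable is replaced by a ground term and the quantifier is removed. -/
inductive BInst (k : ℕ) : Formula S → Formula S → Prop
  | rel : ∀ r ts, BInst k (.rel r ts) (.rel r ts)
  | eq : ∀ t u, BInst k (.eq t u) (.eq t u)
  | fls : BInst k .fls .fls
  | not : ∀ {φ χ}, BInst k φ χ → BInst k (.not φ) (.not χ)
  | and : ∀ {φ₁ φ₂ χ₁ χ₂}, BInst k φ₁ χ₁ → BInst k φ₂ χ₂ →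
      BInst k (.and φ₁ φ₂) (.and χ₁ χ₂)
  | or : ∀ {φ₁ φ₂ χ₁ χ₂}, BInst k φ₁ χ₁ → BInst k φ₂ χ₂ →
      BInst k (.or φ₁ φ₂) (.or χ₁ χ₂)
  | all : ∀ (x) {φ χ} (t : Term S), t.IsGround → t.depth ≤ k →
      BInst k (φ.substVar x t) χ → BInst k (.all x φ) χ

/-- `Ind = Sk(I) ∧ Sk(δ) ∧ Sk(¬I')`, with fresh Skolem symbols for each conjunct. -/
def IndOf (I : Formula S) (δ : Formula S.double) : Formula S.double.skolemize :=
  Formula.and (Formula.skFrom 0 (I.toDouble false))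
    (Formula.and
      (Formula.skFrom (Formula.skCounter 0 (I.toDouble false)) δ)
      (Formula.skFrom (Formula.skCounter (Formula.skCounter 0 (I.toDouble false)) δ)
        (Formula.not (I.toDouble true))))

/-- The set `{ Ind[t̄] : t̄ ∈ Terms_k, depth(Ind[t̄]) ≤ k }` of Bounded-Horizon
instantiations of bound `k`. -/
def BHSet {T : Sig} (k : ℕ) (Ind : Formula T) : Set (Formula T) :=
  { χ | BInst k Ind χ ∧ χ.tDepth ≤ k }

/-- `I` is provably inductive w.r.t. `δ` with Bounded-Horizon of bound `k`:
the set of instantiations of `Ind = Sk(I) ∧ Sk(δ) ∧ Sk(¬I')` by tuples of ground terms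
of depth at most `k` is unsatisfiable. -/
def ProvablyInductiveBH (I : Formula S) (δ : Formula S.double) (k : ℕ) : Prop :=
  ¬ SetSatisfiable (BHSet k (IndOf I δ))

def Formula.allList : List ℕ → Formula S → Formula S
  | [], φ => φ
  | x :: xs, φ => .all x (Formula.allList xs φ)

def Formula.exList : List ℕ → Formula S → Formula S
  | [], φ => φ
  | x :: xs, φ => .ex x (Formula.exList xs φ)

/-- The existential prefix of a formula: the list of outermost existentially
quantified variables, together with the matrix. -/
def Formula.exPrefix : Formula S → List ℕ × Formula S
  | .ex x φ => ((x :: (Formula.exPrefix φ).1 : List ℕ), (Formula.exPrefix φ).2)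
  | φ => ([], φ)

def Term.funcSyms : Term S → Set S.Func
  | .var _ => ∅
  | .app f ts => insert f (⋃ i, Term.funcSyms (ts i))

def Formula.funcSyms : Formula S → Set S.Func
  | .rel _ ts => ⋃ i, (ts i).funcSyms
  | .eq t u => t.funcSyms ∪ u.funcSyms
  | .fls => ∅
  | .not φ => Formula.funcSyms φ
  | .and φ ψ => Formula.funcSyms φ ∪ Formula.funcSyms ψ
  | .or φ ψ => Formula.funcSyms φ ∪ Formula.funcSyms ψ
  | .all _ φ => Formula.funcSyms φ
  | .ex _ φ => Formula.funcSyms φ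

/-- The set of constants (0-ary function symbols) occurring in a formula. -/
def Formula.constSyms (φ : Formula S) : Set S.Func :=
  { f ∈ φ.funcSyms | S.funcArity f = 0 }

/-- The closed term consisting of the constant symbol `f`. -/
def constTerm (f : S.Func) (h : S.funcArity f = 0) : Term S :=
  .app f fun i => (Fin.cast h i).elim0

/-- `t` is (the term of) a constant symbol belonging to `Cs`. -/
def IsConstTermOf (Cs : Set S.Func) (t : Term S) : Prop :=
  ∃ (f : S.Func) (h : S.funcArity f = 0), f ∈ Cs ∧ t = constTerm f h

/-- The number of existential quantifiers of a formula. -/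
def Formula.countEx : Formula S → ℕ
  | .ex _ φ => Formula.countEx φ + 1
  | .all _ φ => Formula.countEx φ
  | .not φ => Formula.countEx φ
  | .and φ ψ => Formula.countEx φ + Formula.countEx ψ
  | .or φ ψ => Formula.countEx φ + Formula.countEx ψ
  | .rel _ _ => 0
  | .eq _ _ => 0
  | .fls => 0

def Term.unAddRel1 {a : ℕ} : Term (S.addRel a) → Term S
  | .var n => .var n
  | .app f ts => .app f fun i => Term.unAddRel1 (ts i)

def Term.unAddRelD {a : ℕ} : Term ((S.addRel a).double) → Term S.double
  | .var n => .var n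
  | .app f ts => .app f fun i => Term.unAddRelD (ts i)

def Term.unAddRelDsk {a : ℕ} : Term (((S.addRel a).double).skolemize) → Term (S.double.skolemize)
  | .var n => .var n
  | .app f ts => .app f fun i => Term.unAddRelDsk (ts i)

def Term.inclSk : Term S → Term S.skolemize
  | .var n => .var n
  | .app f ts => .app (Sum.inl f) fun i => Term.inclSk (ts i)

def Formula.inclSk : Formula S → Formula S.skolemize
  | .rel r ts => .rel r fun i => (ts i).inclSk
  | .eq t u => .eq t.inclSk u.inclSk
  | .fls => .fls
  | .not φ => .not (Formula.inclSk φ)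
  | .and φ ψ => .and (Formula.inclSk φ) (Formula.inclSk ψ)
  | .or φ ψ => .or (Formula.inclSk φ) (Formula.inclSk ψ)
  | .all x φ => .all x (Formula.inclSk φ)
  | .ex x φ => .ex x (Formula.inclSk φ)

def Term.inclAddRel {a : ℕ} : Term S → Term (S.addRel a)
  | .var n => .var n
  | .app f ts => .app f fun i => Term.inclAddRel (ts i)

def Formula.inclAddRel {a : ℕ} : Formula S → Formula (S.addRel a)
  | .rel r ts => .rel (some r) fun i => (ts i).inclAddRel
  | .eq t u => .eq t.inclAddRel u.inclAddRel
  | .fls => .fls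
  | .not φ => .not (Formula.inclAddRel φ)
  | .and φ ψ => .and (Formula.inclAddRel φ) (Formula.inclAddRel ψ)
  | .or φ ψ => .or (Formula.inclAddRel φ) (Formula.inclAddRel ψ)
  | .all x φ => .all x (Formula.inclAddRel φ)
  | .ex x φ => .ex x (Formula.inclAddRel φ)

def Term.inclAddRelD {a : ℕ} : Term S.double → Term ((S.addRel a).double)
  | .var n => .var n
  | .app f ts => .app f fun i => Term.inclAddRelD (ts i)

def Formula.inclAddRelD {a : ℕ} : Formula S.double → Formula ((S.addRel a).double)
  | .rel r ts => .rel (some r.1, r.2) fun i => (ts i).inclAddRelD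
  | .eq t u => .eq t.inclAddRelD u.inclAddRelD
  | .fls => .fls
  | .not φ => .not (Formula.inclAddRelD φ)
  | .and φ ψ => .and (Formula.inclAddRelD φ) (Formula.inclAddRelD ψ)
  | .or φ ψ => .or (Formula.inclAddRelD φ) (Formula.inclAddRelD ψ)
  | .all x φ => .all x (Formula.inclAddRelD φ)
  | .ex x φ => .ex x (Formula.inclAddRelD φ)

def Term.inclSkD : Term S.double → Term ((S.skolemize).double)
  | .var n => .var n
  | .app f ts => .app (Sum.inl f.1, f.2) fun i => Term.inclSkD (ts i)

def Formula.inclSkD : Formula S.double → Formula ((S.skolemize).double)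
  | .rel r ts => .rel r fun i => (ts i).inclSkD
  | .eq t u => .eq t.inclSkD u.inclSkD
  | .fls => .fls
  | .not φ => .not (Formula.inclSkD φ)
  | .and φ ψ => .and (Formula.inclSkD φ) (Formula.inclSkD ψ)
  | .or φ ψ => .or (Formula.inclSkD φ) (Formula.inclSkD ψ)
  | .all x φ => .all x (Formula.inclSkD φ)
  | .ex x φ => .ex x (Formula.inclSkD φ)

def Term.toDoubleSk (b : Bool) : Term S.skolemize → Term (S.double.skolemize)
  | .var n => .var n
  | .app (Sum.inl f) ts => .app (Sum.inl (f, b)) fun i => Term.toDoubleSk b (ts i)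
  | .app (Sum.inr s) ts => .app (Sum.inr s) fun i => Term.toDoubleSk b (ts i)

/-- Replace every symbol of `Σ` in a formula over the Skolem-extension of `Σ` by the
copy indicated by `b` (Skolem symbols are shared between the two copies). -/
def Formula.toDoubleSk (b : Bool) : Formula S.skolemize → Formula (S.double.skolemize)
  | .rel r ts => .rel (r, b) fun i => (ts i).toDoubleSk b
  | .eq t u => .eq (t.toDoubleSk b) (u.toDoubleSk b)
  | .fls => .fls
  | .not φ => .not (Formula.toDoubleSk b φ)
  | .and φ ψ => .and (Formula.toDoubleSk b φ) (Formula.toDoubleSk b ψ)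
  | .or φ ψ => .or (Formula.toDoubleSk b φ) (Formula.toDoubleSk b ψ)
  | .all x φ => .all x (Formula.toDoubleSk b φ)
  | .ex x φ => .ex x (Formula.toDoubleSk b φ)

/-- `χ[ψ/r, ψ'/r']`: replace every atom of `r` (resp. `r'`) in the two-vocabulary
formula `χ` over `Σ̂ ⊎ Σ̂'` by `ψ` (resp. `ψ'`), whose free variables `0, …, a-1`
are substituted by the arguments of the atom. -/
def Formula.substRD {a : ℕ} (ψ : Formula S) :
    Formula ((S.addRel a).double) → Formula S.double
  | .rel ⟨none, b⟩ ts => (ψ.toDouble b).substEnv fun n =>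
      if h : n < a then Term.unAddRelD (ts ⟨n, h⟩) else .var n
  | .rel ⟨some r₀, b⟩ ts => .rel (r₀, b) fun i => Term.unAddRelD (ts i)
  | .eq t u => .eq t.unAddRelD u.unAddRelD
  | .fls => .fls
  | .not φ => .not (Formula.substRD ψ φ)
  | .and φ χ => .and (Formula.substRD ψ φ) (Formula.substRD ψ χ)
  | .or φ χ => .or (Formula.substRD ψ φ) (Formula.substRD ψ χ)
  | .all x φ => .all x (Formula.substRD ψ φ)
  | .ex x φ => .ex x (Formula.substRD ψ φ)

/-- `χ[ψ/r]`: replace every atom of `r` in the (one-vocabulary) formula `χ` over `Σ̂`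
by `ψ`, whose free variables `0, …, a-1` are substituted by the arguments of the atom. -/
def Formula.substR1 {a : ℕ} (ψ : Formula S) : Formula (S.addRel a) → Formula S
  | .rel none ts => ψ.substEnv fun n =>
      if h : n < a then Term.unAddRel1 (ts ⟨n, h⟩) else .var n
  | .rel (some r₀) ts => .rel r₀ fun i => Term.unAddRel1 (ts i)
  | .eq t u => .eq t.unAddRel1 u.unAddRel1
  | .fls => .fls
  | .not φ => .not (Formula.substR1 ψ φ)
  | .and φ χ => .and (Formula.substR1 ψ φ) (Formula.substR1 ψ χ)
  | .or φ χ => .or (Formula.substR1 ψ φ) (Formula.substR1 ψ χ)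
  | .all x φ => .all x (Formula.substR1 ψ φ)
  | .ex x φ => .ex x (Formula.substR1 ψ φ)

/-- `χ[ψ/r, ψ'/r']` for formulas over the Skolem-extension of `Σ̂ ⊎ Σ̂'`. -/
def Formula.substRDsk {a : ℕ} (ψ : Formula S) :
    Formula (((S.addRel a).double).skolemize) → Formula (S.double.skolemize)
  | .rel ⟨none, b⟩ ts => ((ψ.toDouble b).inclSk).substEnv fun n =>
      if h : n < a then Term.unAddRelDsk (ts ⟨n, h⟩) else .var n
  | .rel ⟨some r₀, b⟩ ts => .rel (r₀, b) fun i => Term.unAddRelDsk (ts i)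
  | .eq t u => .eq t.unAddRelDsk u.unAddRelDsk
  | .fls => .fls
  | .not φ => .not (Formula.substRDsk ψ φ)
  | .and φ χ => .and (Formula.substRDsk ψ φ) (Formula.substRDsk ψ χ)
  | .or φ χ => .or (Formula.substRDsk ψ φ) (Formula.substRDsk ψ χ)
  | .all x φ => .all x (Formula.substRDsk ψ φ)
  | .ex x φ => .ex x (Formula.substRDsk ψ φ)

/-- `rOcc b φ` holds iff every occurrence of the fresh relation symbol `r` in `φ` has
polarity `b` (`true` = positive, i.e. under an even number of negations in negation
normal form; `false` = negative). -/
def Formula.rOcc {a : ℕ} : Bool → Formula (S.addRel a) → Prop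
  | b, .rel none _ => b = true
  | _, .rel (some _) _ => True
  | _, .eq _ _ => True
  | _, .fls => True
  | b, .not φ => Formula.rOcc (!b) φ
  | b, .and φ ψ => Formula.rOcc b φ ∧ Formula.rOcc b ψ
  | b, .or φ ψ => Formula.rOcc b φ ∧ Formula.rOcc b ψ
  | b, .all _ φ => Formula.rOcc b φ
  | b, .ex _ φ => Formula.rOcc b φ

/-- The relation symbol `r` occurs only positively in `φ`. -/
def Formula.OnlyPosR {a : ℕ} (φ : Formula (S.addRel a)) : Prop := Formula.rOcc true φ

/-- The relation symbol `r` occurs only negatively in `φ`. -/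
def Formula.OnlyNegR {a : ℕ} (φ : Formula (S.addRel a)) : Prop := Formula.rOcc false φ

/-- `δ̂` is a sound instrumentation for `δ` and `ψ`:  `δ → δ̂[ψ/r, ψ'/r']` is valid. -/
def SoundInstr {a : ℕ} (δ : Formula S.double) (ψ : Formula S)
    (δhat : Formula ((S.addRel a).double)) : Prop :=
  Valid (Formula.imp δ (Formula.substRD ψ δhat))

/-- `δ̂` is a sound instrumentation without additional existentials for `δ` and `ψ`:
there is an existential naming `η`, mapping each existentially quantified variable of
`δ̂ = ∃z₁…z_m. φ` to a constant of `Sk(δ)` or of `δ̂`, such that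
`Sk(δ) → η(δ̂)[ψ/r, ψ'/r']` is valid. -/
def SoundInstrNoExists {a : ℕ} (δ : Formula S.double) (ψ : Formula S)
    (δhat : Formula ((S.addRel a).double)) : Prop :=
  ∃ η : ℕ → Term (((S.addRel a).double).skolemize),
    (∀ z ∈ δhat.exPrefix.1,
      IsConstTermOf (S := ((S.addRel a).double).skolemize)
        (((Formula.sk δ).constSyms : Set ((((S.addRel a).double).skolemize).Func)) ∪
          (Formula.inclSk δhat).constSyms)
        (η z)) ∧
    (∀ z, z ∉ δhat.exPrefix.1 → η z = .var z) ∧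
    Valid (Formula.imp (Formula.sk δ)
      (Formula.substRDsk ψ ((Formula.inclSk δhat.exPrefix.2).substEnv η)))

/-- The interpretation in `A` of the constant symbol `f` (over a relational signature). -/
def constVal (hrel : S.Relational) (A : Struc S) (f : S.Func) : A.Dom :=
  A.interpFunc f fun i => (Fin.cast (hrel f) i).elim0

/-- The substructure of `A` whose domain is the set of interpretations of the
constant symbols. -/
def constSub (hrel : S.Relational) (A : Struc S) [Nonempty S.Func] : Struc S where
  Dom := ↥(Set.range (constVal hrel A))
  dom_nonempty := (Set.range_nonempty _).to_subtype
  interpFunc := fun f _ => ⟨constVal hrel A f, Set.mem_range_self f⟩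
  interpRel := fun r args => A.interpRel r fun i => (args i).1

end BH

namespace BH

section Aux

variable {S : Sig}

theorem Term.eval_ground {A : Struc S} {t : Term S} (h : t.IsGround) (v w : ℕ → A.Dom) :
    t.eval A v = t.eval A w := by
  induction t with
  | var n => exact h.elim
  | app f ts ih => exact congrArg _ (funext fun i => ih i (h i))

theorem Formula.realize_congr {A : Struc S} {φ : Formula S} :
    ∀ {v w : ℕ → A.Dom}, (∀ n ∈ φ.fvars, v n = w n) →
    (φ.Realize A v ↔ φ.Realize A w) := by
  have tcongr : ∀ (t : Term S) (v w : ℕ → A.Dom), (∀ n ∈ t.fvars, v n = w n) →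
      t.eval A v = t.eval A w := by
    intro t
    induction t with
    | var n => exact fun v w h => h n rfl
    | app f ts ih =>
      exact fun v w h => congrArg _ (funext fun i =>
        ih i v w fun n hn => h n (Set.mem_iUnion.2 ⟨i, hn⟩))
  induction φ with
  | rel r ts =>
    intro v w h
    simp only [Formula.Realize]
    rw [show (fun i => (ts i).eval A v) = fun i => (ts i).eval A w from
      funext fun i => tcongr _ _ _ fun n hn => h n (Set.mem_iUnion.2 ⟨i, hn⟩)]
  | eq t u =>
    intro v w h
    simp only [Formula.Realize]
    rw [tcongr t _ _ fun n hn => h n (Set.mem_union_left _ hn),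
        tcongr u _ _ fun n hn => h n (Set.mem_union_right _ hn)]
  | fls => intro v w _; exact Iff.rfl
  | not φ ih => intro v w h; exact not_congr (ih h)
  | and φ χ ihφ ihχ =>
    intro v w h
    exact and_congr (ihφ fun n hn => h n (Set.mem_union_left _ hn))
      (ihχ fun n hn => h n (Set.mem_union_right _ hn))
  | or φ χ ihφ ihχ =>
    intro v w h
    exact or_congr (ihφ fun n hn => h n (Set.mem_union_left _ hn))
      (ihχ fun n hn => h n (Set.mem_union_right _ hn))
  | all x φ ih =>
    intro v w h
    refine forall_congr' fun d => ih fun n hn => ?_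
    by_cases hnx : n = x
    · subst hnx; simp
    · rw [Function.update_of_ne hnx, Function.update_of_ne hnx]
      exact h n ⟨hn, hnx⟩
  | ex x φ ih =>
    intro v w h
    refine exists_congr fun d => ih fun n hn => ?_
    by_cases hnx : n = x
    · subst hnx; simp
    · rw [Function.update_of_ne hnx, Function.update_of_ne hnx]
      exact h n ⟨hn, hnx⟩

theorem Term.eval_substEnv {A : Struc S} (σ : ℕ → Term S) (t : Term S) (v : ℕ → A.Dom) :
    (t.substEnv σ).eval A v = t.eval A fun n => (σ n).eval A v := by
  induction t with
  | var n => rfl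
  | app f ts ih => exact congrArg _ (funext fun i => ih i)

/-- Substitutions that cannot be captured: each value is ground or a variable mapped
to itself. -/
def GoodEnv (σ : ℕ → Term S) : Prop := ∀ n, (σ n).IsGround ∨ σ n = .var n

theorem Formula.realize_substEnv {A : Struc S} {φ : Formula S} :
    ∀ {σ : ℕ → Term S}, GoodEnv σ → ∀ v : ℕ → A.Dom,
    ((φ.substEnv σ).Realize A v ↔ φ.Realize A fun n => (σ n).eval A v) := by
  induction φ with
  | rel r ts =>
    intro σ _ v
    simp only [Formula.substEnv, Formula.Realize]
    rw [show (fun i => ((ts i).substEnv σ).eval A v) =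
        fun i => (ts i).eval A fun n => (σ n).eval A v from
      funext fun i => Term.eval_substEnv σ (ts i) v]
  | eq t u =>
    intro σ _ v
    simp only [Formula.substEnv, Formula.Realize]
    rw [Term.eval_substEnv σ t v, Term.eval_substEnv σ u v]
  | fls => intro σ _ v; exact Iff.rfl
  | not φ ih => intro σ hσ v; exact not_congr (ih hσ v)
  | and φ χ ihφ ihχ => intro σ hσ v; exact and_congr (ihφ hσ v) (ihχ hσ v)
  | or φ χ ihφ ihχ => intro σ hσ v; exact or_congr (ihφ hσ v) (ihχ hσ v)
  | all x φ ih =>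
    intro σ hσ v
    simp only [Formula.substEnv, Formula.Realize]
    refine forall_congr' fun d => ?_
    have hσ' : GoodEnv (Function.update σ x (.var x)) := fun n => by
      by_cases h : n = x
      · subst h; right; simp
      · rw [Function.update_of_ne h]; exact hσ n
    rw [ih hσ' (Function.update v x d)]
    refine Formula.realize_congr fun n _ => ?_
    by_cases h : n = x
    · subst h; simp [Term.eval]
    · rw [Function.update_of_ne h, Function.update_of_ne h]
      rcases hσ n with hg | hv
      · exact Term.eval_ground hg _ _
      · rw [hv]; exact Function.update_of_ne h d v
  | ex x φ ih =>
    intro σ hσ v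
    simp only [Formula.substEnv, Formula.Realize]
    refine exists_congr fun d => ?_
    have hσ' : GoodEnv (Function.update σ x (.var x)) := fun n => by
      by_cases h : n = x
      · subst h; right; simp
      · rw [Function.update_of_ne h]; exact hσ n
    rw [ih hσ' (Function.update v x d)]
    refine Formula.realize_congr fun n _ => ?_
    by_cases h : n = x
    · subst h; simp [Term.eval]
    · rw [Function.update_of_ne h, Function.update_of_ne h]
      rcases hσ n with hg | hv
      · exact Term.eval_ground hg _ _
      · rw [hv]; exact Function.update_of_ne h d v

theorem Formula.realize_exList {A : Struc S} (χ : Formula S) :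
    ∀ (ys : List ℕ) (v : ℕ → A.Dom),
    (Formula.exList ys χ).Realize A v ↔
      ∃ v' : ℕ → A.Dom, (∀ n, n ∉ ys → v' n = v n) ∧ χ.Realize A v' := by
  intro ys
  induction ys with
  | nil =>
    intro v
    constructor
    · exact fun h => ⟨v, fun _ _ => rfl, h⟩
    · rintro ⟨v', hv', h⟩
      exact (Formula.realize_congr fun n _ => hv' n (by simp)).1 h
  | cons x xs ih =>
    intro v
    simp only [Formula.exList, Formula.Realize]
    constructor
    · rintro ⟨d, hd⟩
      obtain ⟨v', hv', h⟩ := (ih _).1 hd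
      refine ⟨v', fun n hn => ?_, h⟩
      have hnx : n ≠ x := fun e => hn (by simp [e])
      have hnxs : n ∉ xs := fun e => hn (by simp [e])
      rw [hv' n hnxs, Function.update_of_ne hnx]
    · rintro ⟨v', hv', h⟩
      refine ⟨v' x, (ih _).2 ⟨v', fun n hn => ?_, h⟩⟩
      by_cases hnx : n = x
      · subst hnx; simp
      · rw [Function.update_of_ne hnx]
        exact hv' n (by simp [hnx, hn])

theorem Formula.realize_allList {A : Struc S} (χ : Formula S) :
    ∀ (xs : List ℕ) (v : ℕ → A.Dom),
    (Formula.allList xs χ).Realize A v ↔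
      ∀ v' : ℕ → A.Dom, (∀ n, n ∉ xs → v' n = v n) → χ.Realize A v' := by
  intro xs
  induction xs with
  | nil =>
    intro v
    constructor
    · exact fun h v' hv' => (Formula.realize_congr fun n _ => hv' n (by simp)).2 h
    · exact fun h => h v fun _ _ => rfl
  | cons x xs ih =>
    intro v
    simp only [Formula.allList, Formula.Realize]
    constructor
    · intro H v' hv'
      refine (ih (Function.update v x (v' x))).1 (H (v' x)) v' fun n hn => ?_
      by_cases hnx : n = x
      · subst hnx; simp
      · rw [Function.update_of_ne hnx]
        exact hv' n (by simp [hnx, hn])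
    · intro H d
      refine (ih _).2 fun v' hv' => H v' fun n hn => ?_
      have hnx : n ≠ x := fun e => hn (by simp [e])
      have hnxs : n ∉ xs := fun e => hn (by simp [e])
      rw [hv' n hnxs, Function.update_of_ne hnx]

theorem Term.unAddRelD_inclAddRelD {a : ℕ} (t : Term S.double) :
    (Term.inclAddRelD (a := a) t).unAddRelD = t := by
  induction t with
  | var n => rfl
  | app f ts ih => exact congrArg _ (funext ih)

theorem Formula.substRD_inclAddRelD {a : ℕ} (ψ : Formula S) (χ : Formula S.double) :
    Formula.substRD (a := a) ψ (χ.inclAddRelD) = χ := by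
  induction χ with
  | rel r ts =>
    obtain ⟨r0, b⟩ := r
    show Formula.rel (S := S.double) (r0, b) _ = _
    exact congrArg _ (funext fun i => Term.unAddRelD_inclAddRelD (ts i))
  | eq t u =>
    show Formula.eq _ _ = Formula.eq _ _
    rw [Term.unAddRelD_inclAddRelD, Term.unAddRelD_inclAddRelD]
  | fls => rfl
  | not φ ih => exact congrArg _ ih
  | and φ χ ihφ ihχ => rw [show Formula.substRD (a := a) ψ ((φ.and χ).inclAddRelD) =
      (Formula.substRD ψ φ.inclAddRelD).and (Formula.substRD ψ χ.inclAddRelD) from rfl, ihφ, ihχ]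
  | or φ χ ihφ ihχ => rw [show Formula.substRD (a := a) ψ ((φ.or χ).inclAddRelD) =
      (Formula.substRD ψ φ.inclAddRelD).or (Formula.substRD ψ χ.inclAddRelD) from rfl, ihφ, ihχ]
  | all x φ ih => rw [show Formula.substRD (a := a) ψ ((Formula.all x φ).inclAddRelD) =
      Formula.all x (Formula.substRD ψ φ.inclAddRelD) from rfl, ih]
  | ex x φ ih => rw [show Formula.substRD (a := a) ψ ((Formula.ex x φ).inclAddRelD) =
      Formula.ex x (Formula.substRD ψ φ.inclAddRelD) from rfl, ih]

theorem Term.toDouble_inclAddRel {a : ℕ} (b : Bool) (t : Term S) :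
    (Term.inclAddRel (a := a) t).toDouble b = (t.toDouble b).inclAddRelD := by
  induction t with
  | var n => rfl
  | app f ts ih => exact congrArg _ (funext ih)

theorem Formula.toDouble_inclAddRel {a : ℕ} (b : Bool) (φ : Formula S) :
    (Formula.inclAddRel (a := a) φ).toDouble b = (φ.toDouble b).inclAddRelD := by
  induction φ with
  | rel r ts => exact congrArg _ (funext fun i => Term.toDouble_inclAddRel b (ts i))
  | eq t u => rw [show ((Formula.eq t u).inclAddRel (a := a)).toDouble b =
      .eq ((t.inclAddRel).toDouble b) ((u.inclAddRel).toDouble b) from rfl,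
      Term.toDouble_inclAddRel, Term.toDouble_inclAddRel]; rfl
  | fls => rfl
  | not φ ih => exact congrArg _ ih
  | and φ χ ihφ ihχ => show Formula.and _ _ = Formula.and _ _; rw [ihφ, ihχ]
  | or φ χ ihφ ihχ => show Formula.or _ _ = Formula.or _ _; rw [ihφ, ihχ]
  | all x φ ih => show Formula.all x _ = Formula.all x _; rw [ih]
  | ex x φ ih => show Formula.ex x _ = Formula.ex x _; rw [ih]

theorem Term.unAddRelD_substEnv {a : ℕ} (σ : ℕ → Term ((S.addRel a).double))
    (t : Term S.double) :
    ((t.inclAddRelD.substEnv σ)).unAddRelD = t.substEnv fun n => (σ n).unAddRelD := by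
  induction t with
  | var n => rfl
  | app f ts ih => exact congrArg _ (funext ih)

theorem Formula.substRD_substEnv {a : ℕ} (ψ : Formula S) (χ : Formula S.double) :
    ∀ σ : ℕ → Term ((S.addRel a).double),
    Formula.substRD ψ ((χ.inclAddRelD).substEnv σ) = χ.substEnv fun n => (σ n).unAddRelD := by
  induction χ with
  | rel r ts =>
    intro σ
    obtain ⟨r0, b⟩ := r
    show Formula.rel (S := S.double) (r0, b) _ = _
    exact congrArg _ (funext fun i => Term.unAddRelD_substEnv σ (ts i))
  | eq t u =>
    intro σ
    show Formula.eq _ _ = Formula.eq _ _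
    rw [Term.unAddRelD_substEnv, Term.unAddRelD_substEnv]
  | fls => intro σ; rfl
  | not φ ih => intro σ; exact congrArg _ (ih σ)
  | and φ χ ihφ ihχ =>
    intro σ
    show Formula.and _ _ = Formula.and _ _
    rw [ihφ, ihχ]
  | or φ χ ihφ ihχ =>
    intro σ
    show Formula.or _ _ = Formula.or _ _
    rw [ihφ, ihχ]
  | all x φ ih =>
    intro σ
    show Formula.all x _ = Formula.all x _
    rw [ih]
    have henv : (fun n => (Function.update σ x (Term.var x) n).unAddRelD) =
        Function.update (fun n => (σ n).unAddRelD) x (Term.var x) := by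
      funext n
      by_cases h : n = x
      · subst h; simp; rfl
      · rw [Function.update_of_ne h, Function.update_of_ne h]
    rw [henv]
  | ex x φ ih =>
    intro σ
    show Formula.ex x _ = Formula.ex x _
    rw [ih]
    have henv : (fun n => (Function.update σ x (Term.var x) n).unAddRelD) =
        Function.update (fun n => (σ n).unAddRelD) x (Term.var x) := by
      funext n
      by_cases h : n = x
      · subst h; simp; rfl
      · rw [Function.update_of_ne h, Function.update_of_ne h]
    rw [henv]

theorem Formula.toDouble_exList (b : Bool) (ys : List ℕ) (φ : Formula S) :
    (Formula.exList ys φ).toDouble b = Formula.exList ys (φ.toDouble b) := by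
  induction ys with
  | nil => rfl
  | cons y ys ih => show Formula.ex y _ = Formula.ex y _; rw [ih]

theorem Formula.inclAddRel_exList {a : ℕ} (ys : List ℕ) (φ : Formula S) :
    (Formula.exList ys φ).inclAddRel (a := a) = Formula.exList ys φ.inclAddRel := by
  induction ys with
  | nil => rfl
  | cons y ys ih => show Formula.ex y _ = Formula.ex y _; rw [ih]

theorem Formula.substRD_exList {a : ℕ} (ψ : Formula S) (ys : List ℕ)
    (χ : Formula ((S.addRel a).double)) :
    Formula.substRD ψ (Formula.exList ys χ) = Formula.exList ys (Formula.substRD ψ χ) := by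
  induction ys with
  | nil => rfl
  | cons y ys ih => show Formula.ex y _ = Formula.ex y _; rw [ih]

theorem Formula.substEnv_exList (σ : ℕ → Term S) (ys : List ℕ) (φ : Formula S)
    (h : ∀ y ∈ ys, σ y = .var y) :
    (Formula.exList ys φ).substEnv σ = Formula.exList ys (φ.substEnv σ) := by
  induction ys with
  | nil => rfl
  | cons y ys ih =>
    show Formula.ex y _ = Formula.ex y _
    rw [show Function.update σ y (.var y) = σ by
      rw [← h y (by simp)]; exact Function.update_eq_self y σ]
    rw [ih fun z hz => h z (by simp [hz])]

theorem Term.fvars_toDouble (b : Bool) (t : Term S) : (t.toDouble b).fvars = t.fvars := by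
  induction t with
  | var n => rfl
  | app f ts ih =>
    show (⋃ i, ((ts i).toDouble b).fvars) = ⋃ i, (ts i).fvars
    exact Set.iUnion_congr ih

theorem Formula.fvars_toDouble (b : Bool) (φ : Formula S) :
    (φ.toDouble b).fvars = φ.fvars := by
  induction φ with
  | rel r ts =>
    show (⋃ i, ((ts i).toDouble b).fvars) = ⋃ i, (ts i).fvars
    exact Set.iUnion_congr fun i => Term.fvars_toDouble b (ts i)
  | eq t u =>
    show ((t.toDouble b).fvars ∪ (u.toDouble b).fvars) = t.fvars ∪ u.fvars
    rw [Term.fvars_toDouble, Term.fvars_toDouble]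
  | fls => rfl
  | not φ ih => exact ih
  | and φ χ ihφ ihχ => show _ ∪ _ = _ ∪ _; rw [ihφ, ihχ]
  | or φ χ ihφ ihχ => show _ ∪ _ = _ ∪ _; rw [ihφ, ihχ]
  | all x φ ih => show _ \ _ = _ \ _; rw [ih]
  | ex x φ ih => show _ \ _ = _ \ _; rw [ih]

theorem Term.fvars_inclAddRel {a : ℕ} (t : Term S) :
    (Term.inclAddRel (a := a) t).fvars = t.fvars := by
  induction t with
  | var n => rfl
  | app f ts ih =>
    show (⋃ i, ((ts i).inclAddRel).fvars) = ⋃ i, (ts i).fvars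
    exact Set.iUnion_congr ih

theorem Formula.fvars_inclAddRel {a : ℕ} (φ : Formula S) :
    (Formula.inclAddRel (a := a) φ).fvars = φ.fvars := by
  induction φ with
  | rel r ts =>
    show (⋃ i, ((ts i).inclAddRel).fvars) = ⋃ i, (ts i).fvars
    exact Set.iUnion_congr fun i => Term.fvars_inclAddRel (ts i)
  | eq t u =>
    show (t.inclAddRel.fvars ∪ u.inclAddRel.fvars) = t.fvars ∪ u.fvars
    rw [Term.fvars_inclAddRel, Term.fvars_inclAddRel]
  | fls => rfl
  | not φ ih => exact ih
  | and φ χ ihφ ihχ => show _ ∪ _ = _ ∪ _; rw [ihφ, ihχ]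
  | or φ χ ihφ ihχ => show _ ∪ _ = _ ∪ _; rw [ihφ, ihχ]
  | all x φ ih => show _ \ _ = _ \ _; rw [ih]
  | ex x φ ih => show _ \ _ = _ \ _; rw [ih]

theorem Formula.fvars_exList (ys : List ℕ) (φ : Formula S) :
    (Formula.exList ys φ).fvars = φ.fvars \ {n | n ∈ ys} := by
  induction ys with
  | nil => simp [Formula.exList]
  | cons y ys ih =>
    show (Formula.exList ys φ).fvars \ {y} = _
    rw [ih]
    ext n
    simp only [Set.mem_diff, Set.mem_setOf_eq, Set.mem_singleton_iff, List.mem_cons]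
    tauto

end Aux

/-- soundness of local instantiations. -/
theorem statement_10 (S : Sig) (a : ℕ) (hrel : S.Relational)
    (ys : List ℕ) (hys : ∀ y ∈ ys, a ≤ y)
    (φ0 : Formula S) (hφ0 : φ0.IsQF)
    (ψ : Formula S) (hψ : ψ = Formula.exList ys φ0) (hψfv : ψ.fvars ⊆ {n | n < a})
    (δ0 : Formula S.double) (hδ : δ0.IsSentence)
    (cs : Fin a → Term ((S.addRel a).double))
    (hcs : ∀ i, ∃ (f : ((S.addRel a).double).Func)
      (h : ((S.addRel a).double).funcArity f = 0), cs i = constTerm f h) :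
    let δ : Formula ((S.addRel a).double) := Formula.inclAddRelD δ0
    let σa : ℕ → Term ((S.addRel a).double) :=
      fun n => if h : n < a then cs ⟨n, h⟩ else .var n
    let body : Formula ((S.addRel a).double) :=
      Formula.imp (.rel (none, false) fun i => cs i)
        (((φ0.inclAddRel).toDouble false).substEnv σa)
    let δhat : Formula ((S.addRel a).double) := Formula.and δ (Formula.exList ys body)
    SoundInstr δ0 ψ δhat ∧
      Valid (Formula.imp
        (Formula.and
          (Formula.allList (List.range a)
            (Formula.iff (.rel (none, false) fun i => .var i.val)
              ((ψ.inclAddRel).toDouble false)))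
          δ)
        δhat) := by
  intro δ σA body δhat
  classical
  have hcsg : ∀ i, (cs i).IsGround := by
    intro i
    obtain ⟨f, h0, e⟩ := hcs i
    rw [e]
    exact fun j => (Fin.cast h0 j).elim0
  have hσy : ∀ y ∈ ys,
      (fun n => if h : n < a then Term.unAddRelD (cs ⟨n, h⟩) else Term.var n) y = Term.var y :=
    fun y hy => dif_neg (not_lt.2 (hys y hy))
  constructor
  · -- SoundInstr
    intro A v
    refine not_or_of_imp fun h0 => ?_
    have eatom : Formula.substRD (a := a) ψ (Formula.rel (none, false) fun i => cs i) =
        Formula.exList ys ((φ0.toDouble false).substEnv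
          fun n => if h : n < a then Term.unAddRelD (cs ⟨n, h⟩) else Term.var n) := by
      show (ψ.toDouble false).substEnv
          (fun n => if h : n < a then Term.unAddRelD (cs ⟨n, h⟩) else Term.var n) = _
      rw [hψ, Formula.toDouble_exList, Formula.substEnv_exList _ _ _ hσy]
    have einst : Formula.substRD ψ (((φ0.inclAddRel).toDouble false).substEnv σA) =
        (φ0.toDouble false).substEnv
          (fun n => if h : n < a then Term.unAddRelD (cs ⟨n, h⟩) else Term.var n) := by
      rw [Formula.toDouble_inclAddRel, Formula.substRD_substEnv]
      have henv : (fun n => (σA n).unAddRelD) =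
          (fun n => if h : n < a then Term.unAddRelD (cs ⟨n, h⟩) else Term.var n) := by
        funext n
        by_cases h : n < a
        · rw [show σA n = cs ⟨n, h⟩ from dif_pos h, dif_pos h]
        · rw [show σA n = Term.var n from dif_neg h, dif_neg h]
          rfl
      rw [henv]
    have ebody : Formula.substRD ψ body =
        Formula.or (Formula.not (Formula.exList ys ((φ0.toDouble false).substEnv
          fun n => if h : n < a then Term.unAddRelD (cs ⟨n, h⟩) else Term.var n)))
          ((φ0.toDouble false).substEnv
            fun n => if h : n < a then Term.unAddRelD (cs ⟨n, h⟩) else Term.var n) := by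
      show Formula.or
          (Formula.not (Formula.substRD ψ (Formula.rel (none, false) fun i => cs i)))
          (Formula.substRD ψ (((φ0.inclAddRel).toDouble false).substEnv σA)) = _
      rw [eatom, einst]
    have key : Formula.substRD ψ δhat =
        Formula.and δ0 (Formula.exList ys
          (Formula.or (Formula.not (Formula.exList ys ((φ0.toDouble false).substEnv
            fun n => if h : n < a then Term.unAddRelD (cs ⟨n, h⟩) else Term.var n)))
            ((φ0.toDouble false).substEnv
              fun n => if h : n < a then Term.unAddRelD (cs ⟨n, h⟩) else Term.var n))) := by
      show Formula.and (Formula.substRD ψ (Formula.inclAddRelD δ0))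
          (Formula.substRD ψ (Formula.exList ys body)) = _
      rw [Formula.substRD_inclAddRelD, Formula.substRD_exList, ebody]
    rw [key]
    refine ⟨h0, ?_⟩
    rw [Formula.realize_exList]
    by_cases hE : (Formula.exList ys ((φ0.toDouble false).substEnv
        fun n => if h : n < a then Term.unAddRelD (cs ⟨n, h⟩) else Term.var n)).Realize A v
    · obtain ⟨v', hv', hrr⟩ := (Formula.realize_exList _ _ _).1 hE
      exact ⟨v', hv', Or.inr hrr⟩
    · exact ⟨v, fun _ _ => rfl, Or.inl hE⟩
  · -- Valid ((∀x̄. r(x̄) ↔ ψ(x̄)) ∧ δ → δ̂)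
    intro A v
    refine not_or_of_imp fun hH => ?_
    refine ⟨hH.2, ?_⟩
    rw [Formula.realize_exList]
    by_cases hr : A.interpRel (none, false) fun i => (cs i).eval A v
    · -- r(c̄) holds: use the iff to get witnesses for ψ(c̄)
      have hall' := (Formula.realize_allList _ _ _).1 hH.1
        (fun n => if h : n < a then (cs ⟨n, h⟩).eval A v else v n)
        (fun n hn => dif_neg fun hlt => hn (List.mem_range.2 hlt))
      have hatom : (Formula.rel (S := (S.addRel a).double) (none, false)
          fun i : Fin a => Term.var i.val).Realize A
          (fun n => if h : n < a then (cs ⟨n, h⟩).eval A v else v n) := by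
        show A.interpRel (none, false) _
        convert hr using 2
        rename_i i
        exact dif_pos i.isLt
      rcases hall' with ⟨h1, -⟩
      rcases h1 with h1 | h1
      · exact (h1 hatom).elim
      rw [hψ, Formula.inclAddRel_exList, Formula.toDouble_exList,
        Formula.realize_exList] at h1
      obtain ⟨w, hw, hΦ⟩ := h1
      refine ⟨fun n => if n ∈ ys then w n else v n, fun n hn => if_neg hn, Or.inr ?_⟩
      have hGood : GoodEnv σA := by
        intro n
        by_cases h : n < a
        · left
          rw [show σA n = cs ⟨n, h⟩ from dif_pos h]
          exact hcsg _
        · right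
          exact dif_neg h
      rw [Formula.realize_substEnv hGood]
      refine (Formula.realize_congr fun n hn => ?_).1 hΦ
      rw [Formula.fvars_toDouble, Formula.fvars_inclAddRel] at hn
      by_cases h : n < a
      · have hny : n ∉ ys := fun hy => absurd (hys n hy) (by omega)
        rw [hw n hny, dif_pos h, show σA n = cs ⟨n, h⟩ from dif_pos h]
        exact Term.eval_ground (hcsg _) _ _
      · have hny : n ∈ ys := by
          by_contra hny
          have hmem : n ∈ ψ.fvars := by
            rw [hψ, Formula.fvars_exList]
            exact ⟨hn, hny⟩
          exact h (hψfv hmem)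
        rw [show σA n = Term.var n from dif_neg h]
        show w n = (fun n => if n ∈ ys then w n else v n) n
        simp [hny]
    · exact ⟨v, fun _ _ => rfl, Or.inl hr⟩

end BH
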